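/- Let G be an abelian group and γ : G → Aut(G) a group homomorphism satisfying γ(β(g)) = β⁻¹ ∘ γ(g) ∘ β for all g ∈ G and β ∈ Aut(G). Define g·h := -g + γ(h)(g). Then for all g, h ∈ G, γ(g·h) is the identity automorphism. -/

import Mathlib

theorem stmt_5 {G : Type*} [AddCommGroup G] (γ : G → AddAut G)
    (hhom : ∀ g h : G, γ (g + h) = γ g + γ h)
    (hequiv : ∀ (β : AddAut G) (g : G), γ (β g) = -β + γ g + β) :
    ∀ g h : G, γ (-g + γ h g) = 0 := by
  intro g h
  have h0 : γ 0 = 0 := by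
    have := hhom 0 0
    rw [add_zero] at this
    exact left_eq_add.mp this
  have hneg : γ (-g) = -(γ g) := by
    have := hhom (-g) g
    rw [neg_add_cancel, h0] at this
    exact eq_neg_of_add_eq_zero_left this.symm
  have hcomm : γ g + γ h = γ h + γ g := by rw [← hhom, ← hhom, add_comm]
  rw [hhom, hneg, hequiv (γ h) g, add_assoc _ (γ g) (γ h), hcomm]
  rw [neg_add_cancel_left, neg_add_cancel]
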